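/- If G(v) = 1 − e^{−v/α} for v ≥ 0 (exponential service times with mean α), then for every integer M ≥ 3, V(G) ≤ (e^{2ρ} − 2ρe^ρ − 1)/λ² + e^ρ α² + (2e^ρ/λ²) [∑_{n=3}^M ρⁿ/(n!(n−1)) + (1/M)(e^ρ − ∑_{n=0}^M ρⁿ/n!)]. (This is the improved upper bound (1.7) for the M/M/∞ busy period variance.) -/

import Mathlib

open MeasureTheory Real Set Filter

open scoped Topology

lemma exp_tsum_div (x : ℝ) : Real.exp x = ∑' n : ℕ, x ^ n / (Nat.factorial n) := by
  rw [Real.exp_eq_exp_ℝ, NormedSpace.exp_eq_tsum_div]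

lemma aux_integral_exp {c : ℝ} (hc : 0 < c) (a : ℝ) :
    ∫ t in Ioi a, Real.exp (-c * t) = Real.exp (-c * a) / c := by
  have htend : Tendsto (fun t : ℝ => -Real.exp (-c * t) / c) atTop (𝓝 (-0 / c)) := by
    refine Tendsto.div_const (Tendsto.neg ?_) _
    exact Real.tendsto_exp_atBot.comp (tendsto_id.const_mul_atTop_of_neg (neg_neg_iff_pos.2 hc))
  have h := integral_Ioi_of_hasDerivAt_of_tendsto' (f := fun t => -Real.exp (-c * t) / c)
    (f' := fun t => Real.exp (-c * t)) (a := a) (m := -0/c) ?_ (exp_neg_integrableOn_Ioi a hc) htend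
  · rw [h]; field_simp; ring
  · intro x _
    have h1 : HasDerivAt (fun t : ℝ => -c * t) (-c) x := by
      simpa using (hasDerivAt_id x).const_mul (-c)
    have h2 := (h1.exp).neg.div_const c
    refine h2.congr_deriv ?_
    field_simp

lemma aux_main_integral {ρ α : ℝ} (hρ : 0 < ρ) (hα : 0 < α) :
    ∫ t in Ioi (0:ℝ), (Real.exp (ρ * Real.exp (-(1/α) * t)) - 1)
      = ∑' n : ℕ, (ρ^(n+1) / (Nat.factorial (n+1))) * (α/((n:ℝ)+1)) := by
  set fser : ℕ → ℝ → ℝ := fun n t => ρ^(n+1) * Real.exp (-(((n:ℝ)+1)/α) * t) / (Nat.factorial (n+1)) with hfser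
  have hc : ∀ n : ℕ, (0:ℝ) < ((n:ℝ)+1)/α := fun n => by positivity
  have hpt : ∀ t : ℝ, Real.exp (ρ * Real.exp (-(1/α) * t)) - 1 = ∑' n, fser n t := by
    intro t
    set s := Real.exp (-(1/α) * t) with hs
    have hsum := Real.summable_pow_div_factorial (ρ * s)
    have h0 := exp_tsum_div (ρ * s)
    rw [Summable.tsum_eq_zero_add hsum] at h0
    have hterm : ∀ n : ℕ, (ρ*s)^(n+1) / (Nat.factorial (n+1) : ℝ) = fser n t := by
      intro n
      have hsp : s ^ (n+1) = Real.exp (-(((n:ℝ)+1)/α) * t) := by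
        rw [hs, ← Real.exp_nat_mul]
        congr 1
        push_cast
        field_simp
      simp only [hfser, mul_pow, hsp]
    rw [h0]
    simp only [pow_zero, Nat.factorial_zero, Nat.cast_one, one_div]
    rw [tsum_congr hterm]
    ring
  have hintg : ∀ n : ℕ, ∫ t in Ioi (0:ℝ), fser n t
      = (ρ^(n+1) / (Nat.factorial (n+1))) * (α/((n:ℝ)+1)) := by
    intro n
    have h1 : ∫ t in Ioi (0:ℝ), fser n t
        = (ρ^(n+1) / (Nat.factorial (n+1))) * ∫ t in Ioi (0:ℝ), Real.exp (-(((n:ℝ)+1)/α) * t) := by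
      rw [← integral_const_mul]
      apply setIntegral_congr_fun measurableSet_Ioi
      intro t _
      simp only [hfser]
      ring
    rw [h1, aux_integral_exp (hc n) 0]
    rw [mul_zero, Real.exp_zero]
    congr 1
    field_simp
  have hnn : ∀ n : ℕ, ∀ t : ℝ, 0 ≤ fser n t := by
    intro n t
    have := (Real.exp_pos (-(((n:ℝ)+1)/α) * t)).le
    have h2 : (0:ℝ) < ρ^(n+1) := by positivity
    simp only [hfser]
    positivity
  have hmeas : ∀ n : ℕ, AEStronglyMeasurable (fser n) (volume.restrict (Ioi (0:ℝ))) := by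
    intro n
    apply Continuous.aestronglyMeasurable
    simp only [hfser]
    fun_prop
  have hintegrable : ∀ n : ℕ, IntegrableOn (fser n) (Ioi (0:ℝ)) := by
    intro n
    have := ((exp_neg_integrableOn_Ioi 0 (hc n)).const_mul (ρ^(n+1))).div_const
      ((Nat.factorial (n+1) : ℝ))
    simpa only [hfser, mul_div_assoc, IntegrableOn] using this
  have hcnn : ∀ n : ℕ, 0 ≤ (ρ^(n+1) / (Nat.factorial (n+1) : ℝ)) * (α/((n:ℝ)+1)) := by
    intro n; positivity
  have hcsum : Summable (fun n : ℕ => (ρ^(n+1) / (Nat.factorial (n+1) : ℝ)) * (α/((n:ℝ)+1))) := by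
    have hbase : Summable (fun n : ℕ => ρ^(n+1) / (Nat.factorial (n+1) : ℝ)) :=
      (summable_nat_add_iff 1).2 (Real.summable_pow_div_factorial ρ)
    apply Summable.of_nonneg_of_le hcnn _ (hbase.mul_left α)
    intro n
    rw [mul_comm]
    apply mul_le_mul_of_nonneg_right _ (by positivity)
    exact div_le_self hα.le (by exact_mod_cast Nat.le_add_left 1 n)
  have hlint : ∀ n : ℕ, ∫⁻ t in Ioi (0:ℝ), ‖fser n t‖₊
      = ENNReal.ofReal ((ρ^(n+1) / (Nat.factorial (n+1) : ℝ)) * (α/((n:ℝ)+1))) := by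
    intro n
    rw [← hintg n, ofReal_integral_eq_lintegral_ofReal (hintegrable n)
      (Filter.Eventually.of_forall (fun t => hnn n t))]
    apply lintegral_congr
    intro t
    rw [← enorm_eq_nnnorm, ← ofReal_norm_eq_enorm, Real.norm_of_nonneg (hnn n t)]
  calc ∫ t in Ioi (0:ℝ), (Real.exp (ρ * Real.exp (-(1/α) * t)) - 1)
      = ∫ t in Ioi (0:ℝ), ∑' n, fser n t := by
        apply setIntegral_congr_fun measurableSet_Ioi
        intro t _
        exact hpt t
    _ = ∑' n, ∫ t in Ioi (0:ℝ), fser n t := by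
        apply integral_tsum hmeas
        simp_rw [enorm_eq_nnnorm]
        rw [funext hlint, ← ENNReal.ofReal_tsum_of_nonneg hcnn hcsum]
        exact ENNReal.ofReal_ne_top
    _ = ∑' n : ℕ, (ρ^(n+1) / (Nat.factorial (n+1))) * (α/((n:ℝ)+1)) := tsum_congr hintg

set_option maxHeartbeats 1000000 in
lemma key_series {ρ : ℝ} (hρ : 0 < ρ) (K : ℕ) :
    ρ * ∑' n : ℕ, ρ^(n+1) / (((n:ℝ)+1) * (Nat.factorial (n+1)))
      ≤ (Real.exp ρ - 1 - ρ) + ρ^2/2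
        + (∑ n ∈ Finset.Icc 3 (K+3), ρ ^ n / ((Nat.factorial n) * ((n : ℝ) - 1)))
        + (1 / ((K:ℝ)+3)) * (Real.exp ρ - ∑ n ∈ Finset.range (K+4), ρ ^ n / (Nat.factorial n)) := by
  have hSexp : Summable (fun n : ℕ => ρ^n / (Nat.factorial n : ℝ)) :=
    Real.summable_pow_div_factorial ρ
  have hS2 : Summable (fun n : ℕ => ρ^(n+2) / (Nat.factorial (n+2) : ℝ)) :=
    (summable_nat_add_iff 2).2 hSexp
  have hfacpos : ∀ m : ℕ, (0:ℝ) < (Nat.factorial m : ℝ) := fun m => by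
    exact_mod_cast Nat.factorial_pos m
  have hS2' : Summable (fun n : ℕ => ρ^(n+2) / (((n:ℝ)+1) * (Nat.factorial (n+2)))) := by
    apply Summable.of_nonneg_of_le (fun n => by positivity) _ hS2
    intro n
    apply div_le_div_of_nonneg_left (by positivity) (hfacpos _)
    nlinarith [hfacpos (n+2), (Nat.cast_nonneg n : (0:ℝ) ≤ n)]
  have hS3 : Summable (fun n : ℕ => ρ^(n+3) / (((n:ℝ)+2) * (Nat.factorial (n+3)))) := by
    apply Summable.of_nonneg_of_le (fun n => by positivity) _ ((summable_nat_add_iff 3).2 hSexp)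
    intro n
    apply div_le_div_of_nonneg_left (by positivity) (hfacpos _)
    nlinarith [hfacpos (n+3), (Nat.cast_nonneg n : (0:ℝ) ≤ n)]
  have hρD : ρ * ∑' n : ℕ, ρ^(n+1) / (((n:ℝ)+1) * (Nat.factorial (n+1)))
      = ∑' n : ℕ, (ρ^(n+2) / (Nat.factorial (n+2) : ℝ)
          + ρ^(n+2) / (((n:ℝ)+1) * (Nat.factorial (n+2)))) := by
    rw [← tsum_mul_left]
    apply tsum_congr
    intro n
    have hf : ((Nat.factorial (n+2)) : ℝ) = ((n:ℝ)+2) * (Nat.factorial (n+1)) := by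
      rw [Nat.factorial_succ]; push_cast; ring
    have h1 : (0:ℝ) < (Nat.factorial (n+1)) := hfacpos _
    have hn1 : ((n:ℝ)+1) ≠ 0 := by positivity
    have hn2 : ((n:ℝ)+2) ≠ 0 := by positivity
    rw [hf]
    field_simp
    ring
  have hA : ∑' n : ℕ, ρ^(n+2) / (Nat.factorial (n+2) : ℝ) = Real.exp ρ - 1 - ρ := by
    have h := Summable.sum_add_tsum_nat_add (f := fun n : ℕ => ρ^n / (Nat.factorial n : ℝ)) 2 hSexp
    rw [← exp_tsum_div ρ] at h
    have h2 : ∑ i ∈ Finset.range 2, ρ^i / (Nat.factorial i : ℝ) = 1 + ρ := by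
      simp [Finset.sum_range_succ]
    rw [h2] at h
    linarith
  have hB : ∑' n : ℕ, ρ^(n+2) / (((n:ℝ)+1) * (Nat.factorial (n+2)))
      = ρ^2/2 + ∑' n : ℕ, ρ^(n+3) / (((n:ℝ)+2) * (Nat.factorial (n+3))) := by
    rw [Summable.tsum_eq_zero_add hS2']
    congr 1
    · norm_num [Nat.factorial]
    · apply tsum_congr
      intro n
      push_cast
      ring_nf
  have hC : ∑' n : ℕ, ρ^(n+3) / (((n:ℝ)+2) * (Nat.factorial (n+3)))
      = (∑ i ∈ Finset.range (K+1), ρ^(i+3) / (((i:ℝ)+2) * (Nat.factorial (i+3))))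
        + ∑' i : ℕ, ρ^(i+(K+1)+3) / (((i:ℝ)+(K+1)+2) * (Nat.factorial (i+(K+1)+3))) := by
    rw [← Summable.sum_add_tsum_nat_add (K+1) hS3]
    congr 1
    apply tsum_congr
    intro i
    push_cast
    ring_nf
  have hfin : ∑ i ∈ Finset.range (K+1), ρ^(i+3) / (((i:ℝ)+2) * (Nat.factorial (i+3)))
      = ∑ n ∈ Finset.Icc 3 (K+3), ρ ^ n / ((Nat.factorial n) * ((n : ℝ) - 1)) := by
    rw [← Finset.Ico_add_one_right_eq_Icc, Finset.sum_Ico_eq_sum_range]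
    have hkk : K+3+1-3 = K+1 := by omega
    rw [hkk]
    apply Finset.sum_congr rfl
    intro i _
    have h1 : 3 + i = i + 3 := by omega
    rw [h1]
    push_cast
    ring
  have htail : ∑' i : ℕ, ρ^(i+(K+1)+3) / (((i:ℝ)+(K+1)+2) * (Nat.factorial (i+(K+1)+3)))
      ≤ (1 / ((K:ℝ)+3)) * (Real.exp ρ - ∑ n ∈ Finset.range (K+4), ρ ^ n / (Nat.factorial n)) := by
    have hsr : Summable (fun i : ℕ =>
        ρ^(i+(K+1)+3) / (((i:ℝ)+(K+1)+2) * (Nat.factorial (i+(K+1)+3)))) := by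
      have := (summable_nat_add_iff (K+1)).2 hS3
      apply this.congr
      intro i
      push_cast
      ring_nf
    have hse : Summable (fun i : ℕ =>
        (1/((K:ℝ)+3)) * (ρ^(i+(K+4)) / (Nat.factorial (i+(K+4)) : ℝ))) :=
      ((summable_nat_add_iff (K+4)).2 hSexp).mul_left _
    have hle : ∀ i : ℕ, ρ^(i+(K+1)+3) / (((i:ℝ)+(K+1)+2) * (Nat.factorial (i+(K+1)+3)))
        ≤ (1/((K:ℝ)+3)) * (ρ^(i+(K+4)) / (Nat.factorial (i+(K+4)) : ℝ)) := by
      intro i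
      have hidx : i+(K+1)+3 = i+(K+4) := by omega
      rw [hidx]
      have hF : (0:ℝ) < (Nat.factorial (i+(K+4)) : ℝ) := hfacpos _
      have hK3 : (0:ℝ) < (K:ℝ)+3 := by positivity
      rw [one_div, inv_mul_eq_div, div_div]
      apply div_le_div_of_nonneg_left (by positivity) (by positivity)
      nlinarith [(Nat.cast_nonneg i : (0:ℝ) ≤ i)]
    calc ∑' i : ℕ, ρ^(i+(K+1)+3) / (((i:ℝ)+(K+1)+2) * (Nat.factorial (i+(K+1)+3)))
        ≤ ∑' i : ℕ, (1/((K:ℝ)+3)) * (ρ^(i+(K+4)) / (Nat.factorial (i+(K+4)) : ℝ)) :=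
          Summable.tsum_le_tsum hle hsr hse
      _ = (1/((K:ℝ)+3)) * ∑' i : ℕ, ρ^(i+(K+4)) / (Nat.factorial (i+(K+4)) : ℝ) :=
          tsum_mul_left
      _ = (1 / ((K:ℝ)+3)) * (Real.exp ρ - ∑ n ∈ Finset.range (K+4), ρ ^ n / (Nat.factorial n)) := by
          have h := Summable.sum_add_tsum_nat_add (f := fun n : ℕ => ρ^n / (Nat.factorial n : ℝ)) (K+4) hSexp
          rw [← exp_tsum_div ρ] at h
          have : ∑' i : ℕ, ρ^(i+(K+4)) / (Nat.factorial (i+(K+4)) : ℝ)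
              = Real.exp ρ - ∑ n ∈ Finset.range (K+4), ρ ^ n / (Nat.factorial n) := by
            linarith
          rw [this]
  rw [hρD, Summable.tsum_add hS2 hS2', hA, hB, hC, hfin]
  linarith

lemma final_alg {lam E ρ D T : ℝ} (hlam : 0 < lam) (hE : 0 < E)
    (hkey : ρ * D ≤ (E - 1 - ρ) + ρ^2/2 + T) :
    (2 * E / lam) * ((ρ/lam) * D) - ((E - 1) / lam) ^ 2
      ≤ (E * E - 2 * ρ * E - 1) / lam ^ 2 + E * (ρ/lam) ^ 2 + (2 * E / lam ^ 2) * T := by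
  have hpos : (0:ℝ) < 2 * E / lam ^ 2 := by positivity
  have h2 := mul_le_mul_of_nonneg_left hkey hpos.le
  have e1 : (2 * E / lam) * ((ρ/lam) * D) - ((E - 1) / lam) ^ 2
      = (2 * E / lam ^ 2) * (ρ * D) - (E-1)^2 / lam^2 := by
    field_simp
  have e2 : (E * E - 2 * ρ * E - 1) / lam ^ 2 + E * (ρ/lam) ^ 2 + (2 * E / lam ^ 2) * T
      = (2 * E / lam ^ 2) * ((E - 1 - ρ) + ρ^2/2 + T) - (E-1)^2 / lam^2 := by
    field_simp
    ring
  rw [e1, e2]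
  linarith

/-- The improved upper bound (1.7) for the M/M/∞ busy period variance: for exponential
service times with mean `α` and any integer `M ≥ 3`,
`V(G) ≤ (e^{2ρ} - 2ρe^ρ - 1)/λ² + e^ρ α² + (2e^ρ/λ²)[∑_{n=3}^M ρⁿ/(n!(n-1)) + (1/M)(e^ρ - ∑_{n=0}^M ρⁿ/n!)]`. -/
theorem mm_infty_busy_period_variance_improved_upper_bound
    (G : ℝ → ℝ)
    (lam α ρ : ℝ)
    (hlam : 0 < lam)
    (hα : 0 < α)
    (hρ : ρ = lam * α)
    (hG : ∀ v : ℝ, 0 ≤ v → G v = 1 - exp (-v / α))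
    (hGneg : ∀ v : ℝ, v < 0 → G v = 0)
    (M : ℕ) (hM : 3 ≤ M) :
    (2 * exp ρ / lam) * (∫ t in Ioi (0:ℝ), (exp (lam * ∫ v in Ioi t, (1 - G v)) - 1))
        - ((exp ρ - 1) / lam) ^ 2
      ≤ (exp (2 * ρ) - 2 * ρ * exp ρ - 1) / lam ^ 2 + exp ρ * α ^ 2
        + (2 * exp ρ / lam ^ 2)
          * ((∑ n ∈ Finset.Icc 3 M, ρ ^ n / ((Nat.factorial n) * ((n : ℝ) - 1)))
            + (1 / (M : ℝ))
              * (exp ρ - ∑ n ∈ Finset.range (M + 1), ρ ^ n / (Nat.factorial n))) := by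
  have hρpos : 0 < ρ := by rw [hρ]; positivity
  have hIeq : (∫ t in Ioi (0:ℝ), (exp (lam * ∫ v in Ioi t, (1 - G v)) - 1))
      = ∑' n : ℕ, (ρ^(n+1) / (Nat.factorial (n+1))) * (α/((n:ℝ)+1)) := by
    rw [← aux_main_integral hρpos hα]
    apply setIntegral_congr_fun measurableSet_Ioi
    intro t ht
    have hIn : (∫ v in Ioi t, (1 - G v)) = α * Real.exp (-(1/α) * t) := by
      rw [setIntegral_congr_fun measurableSet_Ioi
        (g := fun v => Real.exp (-(1/α) * v)) (f := fun v => 1 - G v) ?_]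
      · rw [aux_integral_exp (by positivity : (0:ℝ) < 1/α) t]
        field_simp
      · intro v hv
        have hv0 : (0:ℝ) ≤ v := le_of_lt (lt_trans ht hv)
        have harg : -v/α = -(1/α)*v := by ring
        simp only [hG v hv0, harg]
        ring
    show rexp (lam * ∫ v in Ioi t, (1 - G v)) - 1 = rexp (ρ * rexp (-(1/α) * t)) - 1
    rw [hIn]
    have harg2 : lam * (α * Real.exp (-(1/α) * t)) = ρ * Real.exp (-(1/α) * t) := by
      rw [hρ]; ring
    rw [harg2]
  have hCD : ∑' n : ℕ, (ρ^(n+1) / (Nat.factorial (n+1))) * (α/((n:ℝ)+1))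
      = α * ∑' n : ℕ, ρ^(n+1) / (((n:ℝ)+1) * (Nat.factorial (n+1))) := by
    rw [← tsum_mul_left]
    apply tsum_congr
    intro n
    have h1 : (0:ℝ) < (Nat.factorial (n+1)) := by exact_mod_cast Nat.factorial_pos _
    have hn1 : ((n:ℝ)+1) ≠ 0 := by positivity
    field_simp
  obtain ⟨K, rfl⟩ : ∃ K, M = K + 3 := ⟨M - 3, by omega⟩
  rw [hIeq, hCD]
  have hM1 : K + 3 + 1 = K + 4 := by omega
  rw [hM1]
  have hMc : ((K+3 : ℕ):ℝ) = (K:ℝ)+3 := by push_cast; ring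
  rw [hMc]
  have hαρ : α = ρ / lam := by rw [hρ]; field_simp
  have hexp2 : Real.exp (2*ρ) = Real.exp ρ * Real.exp ρ := by rw [two_mul, Real.exp_add]
  rw [hexp2, hαρ]
  exact final_alg hlam (Real.exp_pos ρ) (by linarith [key_series hρpos K])
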